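/- For all equivalent reduced n-expressions u, v, one has dist(u,v) ≥ Inv(S(u),S(v))/3, where Inv(S(u),S(v)) is the total number of unordered pairs of names whose relative order differs between S(u) and S(v); indeed, a type I braid relation changes Inv by exactly 3 and a commutation relation changes it by exactly 1. -/

import Mathlib

open scoped Classical

noncomputable section

/-- adjacent transposition `s i = (i, i+1)` acting on ℕ (1-indexed positions) -/
def s (i : ℕ) : Equiv.Perm ℕ := Equiv.swap i (i + 1)

/-- permutation represented by a word; letters are applied left to right
(`wperm (u ++ v) = wperm v * wperm u`, i.e. `u` first, then `v`). -/
def wperm (w : List ℕ) : Equiv.Perm ℕ := ((w.map s).reverse).prod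

/-- `w` is an `n`-expression: a word in the letters `s 1, ..., s (n-1)` -/
def IsExpr (n : ℕ) (w : List ℕ) : Prop := ∀ i ∈ w, 1 ≤ i ∧ i + 1 ≤ n

/-- set of inversions of a permutation of `{1,...,n}` -/
def invSet (n : ℕ) (π : Equiv.Perm ℕ) : Finset (ℕ × ℕ) :=
  (Finset.Icc 1 n ×ˢ Finset.Icc 1 n).filter (fun pq => pq.1 < pq.2 ∧ π pq.2 < π pq.1)

/-- a reduced `n`-expression: its length equals the inversion number of the
permutation it represents -/
def ReducedExpr (n : ℕ) (w : List ℕ) : Prop :=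
  IsExpr n w ∧ w.length = (invSet n (wperm w)).card

/-- one application of a braid relation `s i s j s i = s j s i s j`, `|i-j| = 1` -/
inductive StepI : List ℕ → List ℕ → Prop
  | mk (a b : List ℕ) (i j : ℕ) (h : i + 1 = j ∨ j + 1 = i) :
      StepI (a ++ i :: j :: i :: b) (a ++ j :: i :: j :: b)

/-- one application of a commutation relation `s i s j = s j s i`, `|i-j| ≥ 2` -/
inductive StepII : List ℕ → List ℕ → Prop
  | mk (a b : List ℕ) (i j : ℕ) (h : i + 2 ≤ j ∨ j + 2 ≤ i) :
      StepII (a ++ i :: j :: b) (a ++ j :: i :: b)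

def BraidStep (u v : List ℕ) : Prop := StepI u v ∨ StepII u v

/-- `c` is a derivation from `u` to `v` by braid relations -/
def IsDeriv (u v : List ℕ) (c : List (List ℕ)) : Prop :=
  c.Chain' BraidStep ∧ c.head? = some u ∧ c.getLast? = some v

/-- combinatorial distance: minimal number of braid relations transforming `u` into `v` -/
def dist (u v : List ℕ) : ℕ :=
  sInf {k | ∃ c, IsDeriv u v c ∧ c.length = k + 1}

/-- the word `s_{j,i} = s_{j-1} s_{j-2} ... s_i` (empty if `j ≤ i`) -/
def sji (j i : ℕ) : List ℕ := (List.range (j - i)).map (fun k => j - 1 - k)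

/-- the normal word `s_{1,f(1)} s_{2,f(2)} ... s_{n,f(n)}` -/
def normalWord (n : ℕ) (f : ℕ → ℕ) : List ℕ :=
  ((List.range n).map (fun k => sji (k + 1) (f (k + 1)))).flatten

/-- `f : {1,...,n} → {1,...,n}` with `1 ≤ f i ≤ i` for all `i` -/
def IsNormalFun (n : ℕ) (f : ℕ → ℕ) : Prop := ∀ i ∈ Finset.Icc 1 n, 1 ≤ f i ∧ f i ≤ i

/-- names of the successive crossings: the name of a letter is the pair of starting
positions of the two strands crossing there -/
def namesAux : Equiv.Perm ℕ → List ℕ → List (Finset ℕ)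
  | _, [] => []
  | π, i :: rest => ({π⁻¹ i, π⁻¹ (i + 1)} : Finset ℕ) :: namesAux (s i * π) rest

/-- the name sequence `S(w)` of a word -/
def names (w : List ℕ) : List (Finset ℕ) := namesAux 1 w

/-- two entries occur in the same relative order in `S` and `S'` -/
def sameOrder (S S' : List (Finset ℕ)) (a b : Finset ℕ) : Prop :=
  (S.idxOf a < S.idxOf b) ↔ (S'.idxOf a < S'.idxOf b)

/-- `I₃(S,S')`: number of triples `{p,q,r} ⊆ {1,...,n}` such that the relative order of
the three pairs `{p,q}, {p,r}, {q,r}` is not the same in `S` and `S'` -/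
def I3 (n : ℕ) (S S' : List (Finset ℕ)) : ℕ :=
  (((Finset.Icc 1 n).powersetCard 3).filter (fun t =>
    ¬ ∀ a ∈ t.powersetCard 2, ∀ b ∈ t.powersetCard 2, sameOrder S S' a b)).card

/-- `I₂,₂(S,S')`: number of unordered pairs of disjoint pairs in `{1,...,n}` whose
relative order is not the same in `S` and `S'` -/
def I22 (n : ℕ) (S S' : List (Finset ℕ)) : ℕ :=
  ((((Finset.Icc 1 n).powersetCard 2).powersetCard 2).filter (fun P =>
    (∀ a ∈ P, ∀ b ∈ P, a ≠ b → Disjoint a b) ∧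
    ¬ ∀ a ∈ P, ∀ b ∈ P, sameOrder S S' a b)).card

/-- total number of unordered pairs of entries whose relative order differs -/
def InvCount (S S' : List (Finset ℕ)) : ℕ :=
  ((S.toFinset.powersetCard 2).filter (fun P =>
    ¬ ∀ a ∈ P, ∀ b ∈ P, sameOrder S S' a b)).card

/-- number of type I steps in a derivation -/
def countStepsI (c : List (List ℕ)) : ℕ :=
  ((Finset.range (c.length - 1)).filter (fun k => StepI (c.getD k []) (c.getD (k + 1) []))).card

/-- number of type II steps in a derivation -/
def countStepsII (c : List (List ℕ)) : ℕ :=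
  ((Finset.range (c.length - 1)).filter (fun k => StepII (c.getD k []) (c.getD (k + 1) []))).card

/-- position of the strand starting at position `p` after the first `k` letters of `w` -/
def strandPos (w : List ℕ) (p k : ℕ) : ℕ := wperm (w.take k) p

/-- number of unit squares to the right of the `n`-th strand in the braid diagram of `w`,
drawn on an `(n-1) × length w` grid -/
def area (n : ℕ) (w : List ℕ) : ℕ :=
  ((List.range w.length).map (fun k => n - max (strandPos w n k) (strandPos w n (k + 1)))).sum

/-- `u_n = s_{1,1} s_{2,1} ... s_{n,1}` -/
def uWord (n : ℕ) : List ℕ := ((List.range n).map (fun k => sji (k + 1) 1)).flatten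

/-- `v_n = s_{n,1} s_{n,2} ... s_{n,n-1}` -/
def vWord (n : ℕ) : List ℕ := ((List.range (n - 1)).map (fun k => sji n (k + 1))).flatten


section Lemmas

lemma wperm_nil : wperm [] = 1 := rfl

lemma wperm_cons (i : ℕ) (w : List ℕ) : wperm (i :: w) = wperm w * s i := by
  simp [wperm]

lemma wperm_append (a b : List ℕ) : wperm (a ++ b) = wperm b * wperm a := by
  simp [wperm, List.reverse_append]

lemma s_inv (i : ℕ) : (s i)⁻¹ = s i := by
  simp [s]

lemma s_apply (i x : ℕ) : s i x = if x = i then i + 1 else if x = i + 1 then i else x := by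
  simp [s, Equiv.swap_apply_def]

lemma finset_pair_eq {a b c d : ℕ} :
    ({a, b} : Finset ℕ) = {c, d} ↔ (a = c ∧ b = d) ∨ (a = d ∧ b = c) := by
  constructor
  · intro h
    have ha := Finset.ext_iff.1 h
    have h1 := (ha a).1 (by simp)
    have h2 := (ha b).1 (by simp)
    have h3 := (ha c).2 (by simp)
    have h4 := (ha d).2 (by simp)
    simp only [Finset.mem_insert, Finset.mem_singleton] at h1 h2 h3 h4
    omega
  · rintro (⟨rfl, rfl⟩ | ⟨rfl, rfl⟩)
    · rfl
    · exact Finset.pair_comm a b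

lemma s_comm {i j : ℕ} (h : i + 2 ≤ j ∨ j + 2 ≤ i) : s i * s j = s j * s i := by
  ext x
  simp only [Equiv.Perm.mul_apply, s_apply]
  split_ifs <;> omega

set_option maxHeartbeats 1000000 in
lemma s_braid (i : ℕ) : s i * s (i + 1) * s i = s (i + 1) * s i * s (i + 1) := by
  ext x
  simp only [Equiv.Perm.mul_apply, s_apply]
  split_ifs <;> omega

lemma s_lt_iff {i a b : ℕ} (hab : a ≠ b) :
    ((s i a < s i b ↔ a < b)) ↔ ¬({a, b} : Finset ℕ) = {i, i + 1} := by
  rw [finset_pair_eq]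
  simp only [s_apply]
  split_ifs <;> omega

end Lemmas
section Names

lemma namesAux_nil (π : Equiv.Perm ℕ) : namesAux π [] = [] := rfl

lemma namesAux_cons (π : Equiv.Perm ℕ) (i : ℕ) (t : List ℕ) :
    namesAux π (i :: t) = ({π⁻¹ i, π⁻¹ (i + 1)} : Finset ℕ) :: namesAux (s i * π) t := rfl

lemma namesAux_append (a : List ℕ) : ∀ (b : List ℕ) (π : Equiv.Perm ℕ),
    namesAux π (a ++ b) = namesAux π a ++ namesAux (wperm a * π) b := by
  induction a with
  | nil => intro b π; simp [wperm_nil, namesAux_nil]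
  | cons i t ih =>
    intro b π
    simp only [List.cons_append, namesAux_cons, ih, wperm_cons, mul_assoc, List.append_eq]

lemma length_namesAux (w : List ℕ) : ∀ π : Equiv.Perm ℕ, (namesAux π w).length = w.length := by
  induction w with
  | nil => intro π; rfl
  | cons i t ih => intro π; simp [namesAux_cons, ih]

lemma pairinv_eq {π : Equiv.Perm ℕ} {i j p q : ℕ} :
    ({π⁻¹ i, π⁻¹ j} : Finset ℕ) = {p, q} ↔ ({i, j} : Finset ℕ) = {π p, π q} := by
  rw [finset_pair_eq, finset_pair_eq]
  simp [Equiv.Perm.inv_eq_iff_eq, Equiv.symm_apply_eq]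

lemma count_namesAux (w : List ℕ) : ∀ (π : Equiv.Perm ℕ) (p q : ℕ), p ≠ q →
    (namesAux π w).count ({p, q} : Finset ℕ) % 2 =
      if ((π p < π q) ↔ (wperm w (π p) < wperm w (π q))) then 0 else 1 := by
  induction w with
  | nil => intro π p q _; simp [namesAux_nil, wperm_nil]
  | cons i t ih =>
    intro π p q hpq
    have hne : π p ≠ π q := fun h => hpq (π.injective h)
    have key := ih (s i * π) p q hpq
    have e1 : (s i * π) p = s i (π p) := rfl
    have e2 : (s i * π) q = s i (π q) := rfl
    have e3 : wperm (i :: t) (π p) = wperm t (s i (π p)) := by rw [wperm_cons]; rfl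
    have e4 : wperm (i :: t) (π q) = wperm t (s i (π q)) := by rw [wperm_cons]; rfl
    have hs := s_lt_iff (i := i) hne
    rw [e1, e2] at key
    rw [namesAux_cons, List.count_cons, e3, e4]
    by_cases hcase : ({π p, π q} : Finset ℕ) = {i, i + 1}
    · have hhead : ({π⁻¹ i, π⁻¹ (i + 1)} : Finset ℕ) = {p, q} := pairinv_eq.2 hcase.symm
      have hflip : ¬(s i (π p) < s i (π q) ↔ π p < π q) := fun h => (hs.1 h) hcase
      have hc : (if ({π⁻¹ i, π⁻¹ (i + 1)} : Finset ℕ) == ({p, q} : Finset ℕ) then 1 else 0) = 1 := by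
        rw [if_pos (by simpa using hhead)]
      rw [hc]
      by_cases hK : (s i (π p) < s i (π q) ↔ wperm t (s i (π p)) < wperm t (s i (π q)))
      · rw [if_pos hK] at key
        rw [if_neg (by tauto)]
        omega
      · rw [if_neg hK] at key
        rw [if_pos (by tauto)]
        omega
    · have hhead : ¬({π⁻¹ i, π⁻¹ (i + 1)} : Finset ℕ) = ({p, q} : Finset ℕ) :=
        fun h => hcase (pairinv_eq.1 h).symm
      have horder : s i (π p) < s i (π q) ↔ π p < π q := hs.2 hcase
      have hc : (if ({π⁻¹ i, π⁻¹ (i + 1)} : Finset ℕ) == ({p, q} : Finset ℕ) then 1 else 0) = 0 := by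
        rw [if_neg (by simpa using hhead)]
      rw [hc]
      by_cases hK : (s i (π p) < s i (π q) ↔ wperm t (s i (π p)) < wperm t (s i (π q)))
      · rw [if_pos hK] at key
        rw [if_pos (by tauto)]
        omega
      · rw [if_neg hK] at key
        rw [if_neg (by tauto)]
        omega

end Names
section Reduced

lemma s_mem_box {n i x : ℕ} (hi : 1 ≤ i) (hi2 : i + 1 ≤ n) :
    s i x ∈ Finset.Icc 1 n ↔ x ∈ Finset.Icc 1 n := by
  simp only [Finset.mem_Icc, s_apply]
  split_ifs <;> omega

lemma mem_namesAux {n : ℕ} : ∀ (w : List ℕ) (π : Equiv.Perm ℕ), IsExpr n w →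
    (∀ x, π x ∈ Finset.Icc 1 n ↔ x ∈ Finset.Icc 1 n) →
    ∀ e ∈ namesAux π w, e ∈ (Finset.Icc 1 n).powersetCard 2 := by
  intro w
  induction w with
  | nil => intro π _ _ e he; simp [namesAux_nil] at he
  | cons i t ih =>
    intro π hw hπ e he
    have hi : 1 ≤ i ∧ i + 1 ≤ n := hw i (by simp)
    rw [namesAux_cons] at he
    rcases List.mem_cons.1 he with rfl | he
    · rw [Finset.mem_powersetCard]
      constructor
      · intro x hx
        simp only [Finset.mem_insert, Finset.mem_singleton] at hx
        rcases hx with rfl | rfl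
        · rw [← hπ, (Equiv.Perm.eq_inv_iff_eq.1 rfl), Finset.mem_Icc]; omega
        · rw [← hπ, (Equiv.Perm.eq_inv_iff_eq.1 rfl), Finset.mem_Icc]; omega
      · rw [Finset.card_pair]
        intro h
        have := π.symm.injective h
        omega
    · refine ih (s i * π) (fun j hj => hw j (by simp [hj])) ?_ e he
      intro x
      rw [show (s i * π) x = s i (π x) from rfl, s_mem_box hi.1 hi.2, hπ]

lemma sum_count_list {α : Type*} [DecidableEq α] (l : List α) (t : Finset α)
    (h : ∀ x ∈ l, x ∈ t) : ∑ a ∈ t, l.count a = l.length := by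
  induction l with
  | nil => simp
  | cons x l ih =>
    simp only [List.count_cons, List.length_cons, beq_iff_eq]
    rw [Finset.sum_add_distrib, ih (fun y hy => h y (List.mem_cons_of_mem x hy))]
    have hx : x ∈ t := h x (by simp)
    have h1 : ∑ x_1 ∈ t, (if x = x_1 then 1 else 0) = 1 := by
      rw [Finset.sum_ite_eq]; simp [hx]
    omega

lemma invSet_target_card (n : ℕ) (π : Equiv.Perm ℕ) :
    ((invSet n π).image (fun pq => ({pq.1, pq.2} : Finset ℕ))).card = (invSet n π).card := by
  apply Finset.card_image_of_injOn
  intro a ha b hb hab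
  rw [Finset.mem_coe] at ha hb
  simp only [invSet, Finset.mem_filter, Finset.mem_product] at ha hb
  rcases finset_pair_eq.1 hab with ⟨h1, h2⟩ | ⟨h1, h2⟩
  · exact Prod.ext h1 h2
  · have := ha.2.1; have := hb.2.1; omega

lemma mem_target_iff {n : ℕ} {π : Equiv.Perm ℕ} {p q : ℕ} (hpq : p < q) :
    ({p, q} : Finset ℕ) ∈ (invSet n π).image (fun pq => ({pq.1, pq.2} : Finset ℕ)) ↔
      (p, q) ∈ invSet n π := by
  constructor
  · intro h
    rcases Finset.mem_image.1 h with ⟨ab, hab, habe⟩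
    have hlt : ab.1 < ab.2 := by
      simp only [invSet, Finset.mem_filter] at hab; exact hab.2.1
    rcases finset_pair_eq.1 habe with ⟨h1, h2⟩ | ⟨h1, h2⟩
    · rwa [show (p, q) = ab from (Prod.ext h1 h2).symm]
    · omega
  · intro h
    exact Finset.mem_image.2 ⟨(p, q), h, rfl⟩

/-- all counts are 1 on the image of the inversion set, 0 elsewhere -/
lemma reduced_count {n : ℕ} {w : List ℕ} (hw : ReducedExpr n w) :
    ∀ x, (names w).count x =
      if x ∈ (invSet n (wperm w)).image (fun pq => ({pq.1, pq.2} : Finset ℕ)) then 1 else 0 := by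
  classical
  set N := names w with hN
  set T := (invSet n (wperm w)).image (fun pq => ({pq.1, pq.2} : Finset ℕ)) with hT
  set P2 := (Finset.Icc 1 n).powersetCard 2 with hP2
  have hmem : ∀ e ∈ N, e ∈ P2 :=
    mem_namesAux w 1 hw.1 (by intro x; simp)
  -- for x in P2, count is odd iff x in T
  have hodd : ∀ x ∈ P2, ((N.count x) % 2 = 1 ↔ x ∈ T) := by
    intro x hx
    rw [Finset.mem_powersetCard] at hx
    rcases Finset.card_eq_two.1 hx.2 with ⟨a, b, hab, rfl⟩
    -- wlog a < b
    have hbox : a ∈ Finset.Icc 1 n ∧ b ∈ Finset.Icc 1 n :=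
      ⟨hx.1 (by simp), hx.1 (by simp)⟩
    rcases Nat.lt_or_ge a b with hlt | hge
    · have hcnt := count_namesAux w 1 a b hab
      rw [Equiv.Perm.one_apply, Equiv.Perm.one_apply] at hcnt
      rw [show namesAux 1 w = N from rfl] at hcnt
      rw [mem_target_iff hlt]
      have hne2 : wperm w a ≠ wperm w b := fun h => hab ((wperm w).injective h)
      simp only [invSet, Finset.mem_filter, Finset.mem_product]
      constructor
      · intro h1
        refine ⟨⟨hbox.1, hbox.2⟩, hlt, ?_⟩
        by_contra hcon
        rw [if_pos (by constructor <;> intro <;> omega)] at hcnt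
        omega
      · intro ⟨_, _, h3⟩
        rw [if_neg (by intro hcon; omega)] at hcnt
        omega
    · have hlt : b < a := by omega
      have hcnt := count_namesAux w 1 b a (Ne.symm hab)
      rw [Equiv.Perm.one_apply, Equiv.Perm.one_apply] at hcnt
      rw [show namesAux 1 w = N from rfl] at hcnt
      rw [Finset.pair_comm, mem_target_iff hlt]
      have hne2 : wperm w b ≠ wperm w a := fun h => hab ((wperm w).injective h.symm)
      simp only [invSet, Finset.mem_filter, Finset.mem_product]
      constructor
      · intro h1
        refine ⟨⟨hbox.2, hbox.1⟩, hlt, ?_⟩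
        by_contra hcon
        rw [if_pos (by constructor <;> intro <;> omega)] at hcnt
        omega
      · intro ⟨_, _, h3⟩
        rw [if_neg (by intro hcon; omega)] at hcnt
        omega
  have hTP2 : T ⊆ P2 := by
    intro x hxT
    rcases Finset.mem_image.1 hxT with ⟨ab, hab, rfl⟩
    simp only [invSet, Finset.mem_filter, Finset.mem_product] at hab
    rw [Finset.mem_powersetCard]
    constructor
    · intro y hy
      simp only [Finset.mem_insert, Finset.mem_singleton] at hy
      rcases hy with rfl | rfl
      · exact hab.1.1
      · exact hab.1.2
    · rw [Finset.card_pair (by omega)]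
  -- total counting
  have hsum : ∑ x ∈ P2, N.count x = N.length := sum_count_list N P2 hmem
  have hlen : N.length = T.card := by
    rw [hN, names, length_namesAux, hw.2, hT, invSet_target_card]
  have hsplit : ∑ x ∈ T, N.count x + ∑ x ∈ P2 \ T, N.count x = T.card := by
    have hsd : ∑ x ∈ P2 \ T, N.count x + ∑ x ∈ T, N.count x = ∑ x ∈ P2, N.count x :=
      Finset.sum_sdiff hTP2
    omega
  have hone : ∀ x ∈ T, 1 ≤ N.count x := by
    intro x hxT
    have := (hodd x (hTP2 hxT)).2 hxT
    omega
  have hcard_le : T.card ≤ ∑ x ∈ T, N.count x := by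
    calc T.card = ∑ _x ∈ T, 1 := by rw [Finset.sum_const, Nat.smul_one_eq_cast]; simp
    _ ≤ ∑ x ∈ T, N.count x := Finset.sum_le_sum hone
  have hzero : ∀ x ∈ P2 \ T, N.count x = 0 := by
    have h0 : ∑ x ∈ P2 \ T, N.count x = 0 := by omega
    intro x hx
    exact Finset.sum_eq_zero_iff.1 h0 x hx
  have hTsum : ∑ x ∈ T, N.count x = T.card := by omega
  have hTone : ∀ x ∈ T, N.count x = 1 := by
    by_contra hcon
    push_neg at hcon
    rcases hcon with ⟨x, hxT, hx1⟩
    have h2 : 2 ≤ N.count x := by have := hone x hxT; omega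
    have : ∑ _x ∈ T, 1 < ∑ x ∈ T, N.count x :=
      Finset.sum_lt_sum hone ⟨x, hxT, by omega⟩
    rw [Finset.sum_const, Nat.smul_one_eq_cast] at this
    simp at this
    omega
  intro x
  by_cases hxT : x ∈ T
  · rw [if_pos hxT]; exact hTone x hxT
  · rw [if_neg hxT]
    by_cases hxP : x ∈ P2
    · exact hzero x (Finset.mem_sdiff.2 ⟨hxP, hxT⟩)
    · rw [List.count_eq_zero]
      exact fun hxN => hxP (hmem x hxN)

lemma reduced_nodup {n : ℕ} {w : List ℕ} (hw : ReducedExpr n w) : (names w).Nodup := by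
  rw [List.nodup_iff_count_le_one]
  intro a
  rw [reduced_count hw a]
  split_ifs <;> omega

lemma reduced_toFinset {n : ℕ} {w : List ℕ} (hw : ReducedExpr n w) :
    (names w).toFinset = (invSet n (wperm w)).image (fun pq => ({pq.1, pq.2} : Finset ℕ)) := by
  ext x
  rw [List.mem_toFinset, ← List.count_pos_iff, reduced_count hw x]
  split_ifs with h <;> simp [h]

end Reduced
section Inv

lemma filter_card_le_add {α : Type*} (s t : Finset α) (hst : s = t) (p q r : α → Prop)
    (ip : DecidablePred p) (iq : DecidablePred q) (ir : DecidablePred r)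
    (h : ∀ x ∈ s, r x → p x ∨ q x) :
    (s.filter r).card ≤ (s.filter p).card + (t.filter q).card := by
  subst hst
  refine le_trans (Finset.card_le_card ?_) (Finset.card_union_le _ _)
  intro x hx
  rw [Finset.mem_filter] at hx
  rcases h x hx.1 hx.2 with hp | hq
  · exact Finset.mem_union_left _ (Finset.mem_filter.2 ⟨hx.1, hp⟩)
  · exact Finset.mem_union_right _ (Finset.mem_filter.2 ⟨hx.1, hq⟩)

lemma invCount_self_eq_zero {S S' : List (Finset ℕ)}
    (h : ∀ a b, sameOrder S S' a b) : InvCount S S' = 0 := by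
  unfold InvCount
  rw [Finset.card_eq_zero]
  simp only [Finset.filter_eq_empty_iff]
  exact fun P _ hn => hn (fun a _ b _ => h a b)

lemma invCount_triangle (S S' S'' : List (Finset ℕ)) (hfs : S.toFinset = S'.toFinset) :
    InvCount S S'' ≤ InvCount S S' + InvCount S' S'' := by
  unfold InvCount
  refine filter_card_le_add _ _ (by rw [hfs]) _ _ _ _ _ _ ?_
  intro P _ hr
  by_contra hcon
  push_neg at hcon
  exact hr (fun a ha b hb => (hcon.1 a ha b hb).trans (hcon.2 a ha b hb))

lemma indexOf_reverse {M : List (Finset ℕ)} (hnd : M.Nodup) {a : Finset ℕ} (ha : a ∈ M) :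
    M.reverse.idxOf a = M.length - 1 - M.idxOf a := by
  have hi : M.idxOf a < M.length := List.idxOf_lt_length_iff.2 ha
  have hlen : M.length - 1 - M.idxOf a < M.reverse.length := by
    rw [List.length_reverse]; omega
  have hget : M.reverse[M.length - 1 - M.idxOf a] = a := by
    rw [List.getElem_reverse]
    simp only [show M.length - 1 - (M.length - 1 - M.idxOf a) = M.idxOf a by omega]
    exact List.getElem_idxOf hi
  conv_lhs => rw [← hget]
  exact List.Nodup.idxOf_getElem (List.nodup_reverse.2 hnd) _ hlen

/-- Key lemma: reversing a middle block changes `Inv` by exactly `choose |M| 2`. -/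
lemma invCount_reverse_mid (A M B : List (Finset ℕ))
    (hnd : (A ++ M ++ B).Nodup) :
    InvCount (A ++ M ++ B) (A ++ M.reverse ++ B) = M.length.choose 2 := by
  classical
  set S := A ++ M ++ B with hS
  set S' := A ++ M.reverse ++ B with hS'
  have hndM : M.Nodup := (hnd.of_append_left).of_append_right
  have hdisjAM : ∀ a ∈ M, a ∉ A := by
    intro a haM haA
    exact (List.disjoint_of_nodup_append hnd.of_append_left) haA haM
  have hdisjMB : ∀ a ∈ B, a ∉ M := by
    intro a haB haM
    exact (List.disjoint_of_nodup_append hnd) (by simp [haM]) haB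
  have hdisjAB : ∀ a ∈ B, a ∉ A := by
    intro a haB haA
    exact (List.disjoint_of_nodup_append hnd) (by simp [haA]) haB
  -- index facts
  have hidxM : ∀ a ∈ M, S.idxOf a = A.length + M.idxOf a := by
    intro a ha
    rw [hS, List.append_assoc, List.idxOf_append_of_notMem (hdisjAM a ha),
      List.idxOf_append_of_mem ha]
  have hidxM' : ∀ a ∈ M, S'.idxOf a = A.length + (M.length - 1 - M.idxOf a) := by
    intro a ha
    rw [hS', List.append_assoc, List.idxOf_append_of_notMem (hdisjAM a ha),
      List.idxOf_append_of_mem (by simpa using ha), indexOf_reverse hndM ha]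
  have hMlt : ∀ a ∈ M, M.idxOf a < M.length := fun a ha => List.idxOf_lt_length_iff.2 ha
  have hidxA : ∀ a ∈ A, S.idxOf a = A.idxOf a ∧ S'.idxOf a = A.idxOf a := by
    intro a ha
    constructor
    · rw [hS, List.append_assoc, List.idxOf_append_of_mem ha]
    · rw [hS', List.append_assoc, List.idxOf_append_of_mem ha]
  have hAlt : ∀ a ∈ A, A.idxOf a < A.length := fun a ha => List.idxOf_lt_length_iff.2 ha
  have hidxB : ∀ a ∈ B, S.idxOf a = A.length + M.length + B.idxOf a ∧
      S'.idxOf a = A.length + M.length + B.idxOf a := by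
    intro a ha
    constructor
    · rw [hS, List.append_assoc, List.idxOf_append_of_notMem (hdisjAB a ha),
        List.idxOf_append_of_notMem (hdisjMB a ha)]
      omega
    · rw [hS', List.append_assoc, List.idxOf_append_of_notMem (hdisjAB a ha),
        List.idxOf_append_of_notMem (by simpa using (hdisjMB a ha))]
      simp only [List.length_reverse]
      omega
  have hsame : ∀ a ∈ S, a ∉ M → (S.idxOf a = S'.idxOf a ∧
      (S.idxOf a < A.length ∨ A.length + M.length ≤ S.idxOf a)) := by
    intro a haS haM
    rw [hS, List.append_assoc, List.mem_append, List.mem_append] at haS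
    rcases haS with ha | ha | ha
    · have h := hidxA a ha
      exact ⟨h.1.trans h.2.symm, Or.inl (h.1 ▸ hAlt a ha)⟩
    · exact absurd ha haM
    · have h := hidxB a ha
      exact ⟨h.1.trans h.2.symm, Or.inr (by omega)⟩
  -- flip characterization
  have hflip : ∀ a ∈ S.toFinset, ∀ b ∈ S.toFinset,
      (¬ sameOrder S S' a b) ↔ (a ≠ b ∧ a ∈ M ∧ b ∈ M) := by
    intro a ha b hb
    rw [List.mem_toFinset] at ha hb
    constructor
    · intro hns
      by_contra hcon
      apply hns
      unfold sameOrder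
      by_cases hab : a = b
      · subst hab; omega
      by_cases haM : a ∈ M
      · by_cases hbM : b ∈ M
        · exact absurd ⟨hab, haM, hbM⟩ hcon
        · have h1 := hidxM a haM
          have h2 := hidxM' a haM
          have h3 := hsame b hb hbM
          have h4 := hMlt a haM
          omega
      · by_cases hbM : b ∈ M
        · have h1 := hidxM b hbM
          have h2 := hidxM' b hbM
          have h3 := hsame a ha haM
          have h4 := hMlt b hbM
          omega
        · have h1 := hsame a ha haM
          have h2 := hsame b hb hbM
          omega
    · rintro ⟨hab, haM, hbM⟩
      unfold sameOrder
      have h1 := hidxM a haM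
      have h2 := hidxM' a haM
      have h3 := hidxM b hbM
      have h4 := hidxM' b hbM
      have h5 := hMlt a haM
      have h6 := hMlt b hbM
      have h7 : M.idxOf a ≠ M.idxOf b := by
        intro h
        exact hab ((List.idxOf_inj haM).1 h)
      intro hiff
      omega
  have hMsub : M.toFinset ⊆ S.toFinset := by
    intro a ha
    rw [List.mem_toFinset] at *
    rw [hS, List.append_assoc, List.mem_append, List.mem_append]
    tauto
  -- the filter is exactly the set of 2-subsets of M.toFinset
  unfold InvCount
  rw [← List.toFinset_card_of_nodup hndM, ← Finset.card_powersetCard]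
  congr 1
  ext P
  simp only [Finset.mem_filter, Finset.mem_powersetCard]
  constructor
  · rintro ⟨⟨hPsub, hPcard⟩, hP⟩
    push_neg at hP
    rcases hP with ⟨a, haP, b, hbP, hnso⟩
    have haS := hPsub haP
    have hbS := hPsub hbP
    rcases (hflip a haS b hbS).1 hnso with ⟨hab, haM, hbM⟩
    have hPeq : P = {a, b} := by
      apply (Finset.eq_of_subset_of_card_le ?_ ?_).symm
      · intro x hx
        simp only [Finset.mem_insert, Finset.mem_singleton] at hx
        rcases hx with rfl | rfl <;> assumption
      · rw [hPcard, Finset.card_pair hab]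
    refine ⟨?_, hPcard⟩
    rw [hPeq]
    intro x hx
    simp only [Finset.mem_insert, Finset.mem_singleton] at hx
    rcases hx with rfl | rfl <;> rw [List.mem_toFinset] <;> assumption
  · rintro ⟨hPsub, hPcard⟩
    refine ⟨⟨hPsub.trans hMsub, hPcard⟩, ?_⟩
    rcases Finset.card_eq_two.1 hPcard with ⟨a, b, hab, rfl⟩
    intro hall
    have haM : a ∈ M := List.mem_toFinset.1 (hPsub (by simp))
    have hbM : b ∈ M := List.mem_toFinset.1 (hPsub (by simp))
    have := (hflip a (hMsub (hPsub (by simp))) b (hMsub (hPsub (by simp)))).2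
      ⟨hab, haM, hbM⟩
    exact this (hall a (by simp) b (by simp))

end Inv
section Steps

lemma s_left (k : ℕ) : s k k = k + 1 := by rw [s_apply, if_pos rfl]

lemma s_right (k : ℕ) : s k (k + 1) = k := by
  rw [s_apply, if_neg (by omega), if_pos rfl]

lemma s_ne (k x : ℕ) (h1 : x ≠ k) (h2 : x ≠ k + 1) : s k x = x := by
  rw [s_apply, if_neg h1, if_neg h2]

lemma inv_apply' (k : ℕ) (ρ : Equiv.Perm ℕ) (m : ℕ) : (s k * ρ)⁻¹ m = ρ⁻¹ (s k m) := by
  rw [mul_inv_rev, Equiv.Perm.mul_apply, s_inv]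

lemma stepI_core (a b : List ℕ) (i : ℕ) :
    ∃ A M B, names (a ++ i :: (i + 1) :: i :: b) = A ++ M ++ B ∧
      names (a ++ (i + 1) :: i :: (i + 1) :: b) = A ++ M.reverse ++ B ∧ M.length = 3 := by
  set π := wperm a with hπ
  have h1 : s i (i + 1) = i := s_right i
  have h2 : s i (i + 1 + 1) = i + 1 + 1 := s_ne i (i + 1 + 1) (by omega) (by omega)
  have h3 : s (i + 1) i = i := s_ne (i + 1) i (by omega) (by omega)
  have h4 : s (i + 1) (i + 1) = i + 1 + 1 := s_left (i + 1)
  have h5 : s (i + 1) (i + 1 + 1) = i + 1 := s_right (i + 1)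
  have h6 : s i i = i + 1 := s_left i
  have hbraid : s (i + 1) * (s i * (s (i + 1) * π)) = s i * (s (i + 1) * (s i * π)) := by
    rw [← mul_assoc, ← mul_assoc, ← mul_assoc, ← mul_assoc, s_braid]
  refine ⟨namesAux 1 a,
    [{π⁻¹ i, π⁻¹ (i + 1)}, {π⁻¹ i, π⁻¹ (i + 1 + 1)}, {π⁻¹ (i + 1), π⁻¹ (i + 1 + 1)}],
    namesAux (s i * (s (i + 1) * (s i * π))) b, ?_, ?_, rfl⟩
  · simp only [names, namesAux_append, namesAux_cons, inv_apply', ← hπ, mul_one,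
      h1, h2, h3, h4, h5, h6, List.reverse_cons, List.reverse_nil, List.nil_append,
      List.cons_append, List.append_assoc]
  · simp only [names, namesAux_append, namesAux_cons, inv_apply', ← hπ, mul_one, hbraid,
      h1, h2, h3, h4, h5, h6, List.reverse_cons, List.reverse_nil, List.nil_append,
      List.cons_append, List.append_assoc]

lemma stepII_core (a b : List ℕ) (i j : ℕ) (hij : i + 2 ≤ j) :
    ∃ A M B, names (a ++ i :: j :: b) = A ++ M ++ B ∧
      names (a ++ j :: i :: b) = A ++ M.reverse ++ B ∧ M.length = 2 := by
  set π := wperm a with hπ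
  have h1 : s i j = j := s_ne i j (by omega) (by omega)
  have h2 : s i (j + 1) = j + 1 := s_ne i (j + 1) (by omega) (by omega)
  have h3 : s j i = i := s_ne j i (by omega) (by omega)
  have h4 : s j (i + 1) = i + 1 := s_ne j (i + 1) (by omega) (by omega)
  have hcomm : s j * (s i * π) = s i * (s j * π) := by
    rw [← mul_assoc, ← mul_assoc, s_comm (Or.inl hij)]
  refine ⟨namesAux 1 a, [{π⁻¹ i, π⁻¹ (i + 1)}, {π⁻¹ j, π⁻¹ (j + 1)}],
    namesAux (s j * (s i * π)) b, ?_, ?_, rfl⟩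
  · simp only [names, namesAux_append, namesAux_cons, inv_apply', ← hπ, mul_one,
      h1, h2, h3, h4, List.reverse_cons, List.reverse_nil, List.nil_append,
      List.cons_append, List.append_assoc]
  · simp only [names, namesAux_append, namesAux_cons, inv_apply', ← hπ, mul_one, hcomm,
      h1, h2, h3, h4, List.reverse_cons, List.reverse_nil, List.nil_append,
      List.cons_append, List.append_assoc]

lemma stepI_decomp {u v : List ℕ} (h : StepI u v) :
    ∃ A M B, names u = A ++ M ++ B ∧ names v = A ++ M.reverse ++ B ∧ M.length = 3 := by
  rcases h with ⟨a, b, i, j, hij | hij⟩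
  · subst hij
    exact stepI_core a b i
  · subst hij
    obtain ⟨A, M, B, e1, e2, e3⟩ := stepI_core a b j
    exact ⟨A, M.reverse, B, e2, by simpa using e1, by simpa using e3⟩

lemma stepII_decomp {u v : List ℕ} (h : StepII u v) :
    ∃ A M B, names u = A ++ M ++ B ∧ names v = A ++ M.reverse ++ B ∧ M.length = 2 := by
  rcases h with ⟨a, b, i, j, hij | hij⟩
  · exact stepII_core a b i j hij
  · obtain ⟨A, M, B, e1, e2, e3⟩ := stepII_core a b j i hij
    exact ⟨A, M.reverse, B, e2, by simpa using e1, by simpa using e3⟩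

lemma stepI_invCount {n : ℕ} {u v : List ℕ} (hu : ReducedExpr n u) (h : StepI u v) :
    InvCount (names u) (names v) = 3 := by
  obtain ⟨A, M, B, h1, h2, h3⟩ := stepI_decomp h
  have hnd : (A ++ M ++ B).Nodup := h1 ▸ reduced_nodup hu
  rw [h1, h2, invCount_reverse_mid A M B hnd, h3]
  decide

lemma stepII_invCount {n : ℕ} {u v : List ℕ} (hu : ReducedExpr n u) (h : StepII u v) :
    InvCount (names u) (names v) = 1 := by
  obtain ⟨A, M, B, h1, h2, h3⟩ := stepII_decomp h
  have hnd : (A ++ M ++ B).Nodup := h1 ▸ reduced_nodup hu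
  rw [h1, h2, invCount_reverse_mid A M B hnd, h3]
  decide

lemma stepI_wperm {u v : List ℕ} (h : StepI u v) : wperm u = wperm v := by
  rcases h with ⟨a, b, i, j, hij⟩
  have : wperm [i, j, i] = wperm [j, i, j] := by
    simp only [wperm_cons, wperm_nil, one_mul]
    rcases hij with rfl | rfl
    · exact s_braid i
    · exact (s_braid j).symm
  calc wperm (a ++ i :: j :: i :: b) = wperm (a ++ [i, j, i] ++ b) := by simp
  _ = wperm b * (wperm [i, j, i] * wperm a) := by rw [wperm_append, wperm_append]
  _ = wperm b * (wperm [j, i, j] * wperm a) := by rw [this]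
  _ = wperm (a ++ [j, i, j] ++ b) := by rw [← wperm_append, ← wperm_append]
  _ = wperm (a ++ j :: i :: j :: b) := by simp

lemma stepII_wperm {u v : List ℕ} (h : StepII u v) : wperm u = wperm v := by
  rcases h with ⟨a, b, i, j, hij⟩
  have : wperm [i, j] = wperm [j, i] := by
    simp only [wperm_cons, wperm_nil, one_mul]
    exact s_comm hij.symm
  calc wperm (a ++ i :: j :: b) = wperm (a ++ [i, j] ++ b) := by simp
  _ = wperm b * (wperm [i, j] * wperm a) := by rw [wperm_append, wperm_append]
  _ = wperm b * (wperm [j, i] * wperm a) := by rw [this]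
  _ = wperm (a ++ [j, i] ++ b) := by rw [← wperm_append, ← wperm_append]
  _ = wperm (a ++ j :: i :: b) := by simp

lemma braidStep_wperm {u v : List ℕ} (h : BraidStep u v) : wperm u = wperm v :=
  h.elim stepI_wperm stepII_wperm

lemma braidStep_reduced {n : ℕ} {u v : List ℕ} (hu : ReducedExpr n u) (h : BraidStep u v) :
    ReducedExpr n v := by
  have hw : wperm u = wperm v := braidStep_wperm h
  have hlen : u.length = v.length := by
    rcases h with ⟨a, b, i, j, _⟩ | ⟨a, b, i, j, _⟩ <;> simp
  have hexpr : IsExpr n v := by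
    intro m hm
    apply hu.1 m
    rcases h with ⟨a, b, i, j, _⟩ | ⟨a, b, i, j, _⟩ <;>
      simp only [List.mem_append, List.mem_cons] at hm ⊢ <;> tauto
  exact ⟨hexpr, by rw [← hlen, hu.2, hw]⟩

end Steps
section Length

lemma invSet_one (n : ℕ) : invSet n 1 = ∅ := by
  rw [invSet, Finset.filter_eq_empty_iff]
  rintro ⟨p, q⟩ _
  simp only [Equiv.Perm.one_apply]
  omega

lemma invSet_card_le {n : ℕ} {w : List ℕ} (hw : IsExpr n w) :
    (invSet n (wperm w)).card ≤ w.length := by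
  classical
  set N := names w with hN
  set T := (invSet n (wperm w)).image (fun pq => ({pq.1, pq.2} : Finset ℕ)) with hT
  set P2 := (Finset.Icc 1 n).powersetCard 2 with hP2
  have hmem : ∀ e ∈ N, e ∈ P2 := mem_namesAux w 1 hw (by intro x; simp)
  have hTP2 : T ⊆ P2 := by
    intro x hxT
    rcases Finset.mem_image.1 hxT with ⟨ab, hab, rfl⟩
    simp only [invSet, Finset.mem_filter, Finset.mem_product] at hab
    rw [Finset.mem_powersetCard]
    constructor
    · intro y hy
      simp only [Finset.mem_insert, Finset.mem_singleton] at hy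
      rcases hy with rfl | rfl
      · exact hab.1.1
      · exact hab.1.2
    · rw [Finset.card_pair (by omega)]
  have hone : ∀ x ∈ T, 1 ≤ N.count x := by
    intro x hxT
    rcases Finset.mem_image.1 hxT with ⟨ab, hab, rfl⟩
    simp only [invSet, Finset.mem_filter, Finset.mem_product] at hab
    have hcnt := count_namesAux w 1 ab.1 ab.2 (by omega)
    rw [Equiv.Perm.one_apply, Equiv.Perm.one_apply] at hcnt
    rw [show namesAux 1 w = N from rfl] at hcnt
    rw [if_neg (by intro hcon; omega)] at hcnt
    omega
  calc (invSet n (wperm w)).card = T.card := (invSet_target_card n (wperm w)).symm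
  _ = ∑ _x ∈ T, 1 := by rw [Finset.sum_const, Nat.smul_one_eq_cast]; simp
  _ ≤ ∑ x ∈ T, N.count x := Finset.sum_le_sum hone
  _ ≤ ∑ x ∈ P2, N.count x := Finset.sum_le_sum_of_subset hTP2
  _ = N.length := sum_count_list N P2 hmem
  _ = w.length := by rw [hN, names, length_namesAux]

lemma s_s (i x : ℕ) : s i (s i x) = x := Equiv.swap_apply_self i (i + 1) x

lemma mem_invSet_iff {n : ℕ} {π : Equiv.Perm ℕ} {p q : ℕ} :
    (p, q) ∈ invSet n π ↔ (p ∈ Finset.Icc 1 n ∧ q ∈ Finset.Icc 1 n ∧ p < q ∧ π q < π p) := by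
  simp only [invSet, Finset.mem_filter, Finset.mem_product]
  tauto

lemma erase_card_eq {n : ℕ} (π : Equiv.Perm ℕ) {i : ℕ} (hi : 1 ≤ i) (hin : i + 1 ≤ n) :
    ((invSet n (π * s i)).erase (i, i + 1)).card = ((invSet n π).erase (i, i + 1)).card := by
  apply Finset.card_bij' (fun x _ => (s i x.1, s i x.2)) (fun x _ => (s i x.1, s i x.2))
  · rintro ⟨p, q⟩ hx
    rw [Finset.mem_erase, mem_invSet_iff] at hx
    obtain ⟨hne, hp, hq, hlt, hgt⟩ := hx
    have hnpair : ¬({p, q} : Finset ℕ) = {i, i + 1} := by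
      rw [finset_pair_eq]
      rintro (⟨rfl, rfl⟩ | ⟨rfl, rfl⟩)
      · exact hne rfl
      · omega
    have hslt : s i p < s i q := ((s_lt_iff (by omega)).2 hnpair).2 hlt
    rw [Finset.mem_erase, mem_invSet_iff]
    refine ⟨?_, (s_mem_box hi hin).2 hp, (s_mem_box hi hin).2 hq, hslt, ?_⟩
    · intro hcon
      rw [Prod.ext_iff] at hcon
      obtain ⟨h1, h2⟩ := hcon
      simp only at h1 h2
      have e1 : p = i + 1 := by rw [← s_s i p, h1, s_left]
      have e2 : q = i := by rw [← s_s i q, h2, s_right]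
      omega
    · show π (s i q) < π (s i p)
      exact hgt
  · rintro ⟨p, q⟩ hx
    rw [Finset.mem_erase, mem_invSet_iff] at hx
    obtain ⟨hne, hp, hq, hlt, hgt⟩ := hx
    have hnpair : ¬({p, q} : Finset ℕ) = {i, i + 1} := by
      rw [finset_pair_eq]
      rintro (⟨rfl, rfl⟩ | ⟨rfl, rfl⟩)
      · exact hne rfl
      · omega
    have hslt : s i p < s i q := ((s_lt_iff (by omega)).2 hnpair).2 hlt
    rw [Finset.mem_erase, mem_invSet_iff]
    refine ⟨?_, (s_mem_box hi hin).2 hp, (s_mem_box hi hin).2 hq, hslt, ?_⟩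
    · intro hcon
      rw [Prod.ext_iff] at hcon
      obtain ⟨h1, h2⟩ := hcon
      simp only at h1 h2
      have e1 : p = i + 1 := by rw [← s_s i p, h1, s_left]
      have e2 : q = i := by rw [← s_s i q, h2, s_right]
      omega
    · show (π * s i) (s i q) < (π * s i) (s i p)
      show π (s i (s i q)) < π (s i (s i p))
      rw [s_s, s_s]
      exact hgt
  · rintro ⟨p, q⟩ _
    simp [s_s]
  · rintro ⟨p, q⟩ _
    simp [s_s]

lemma special_mem_left {n : ℕ} {π : Equiv.Perm ℕ} {i : ℕ} (hi : 1 ≤ i) (hin : i + 1 ≤ n) :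
    (i, i + 1) ∈ invSet n (π * s i) ↔ π i < π (i + 1) := by
  rw [mem_invSet_iff]
  have e1 : (π * s i) (i + 1) = π i := by show π (s i (i + 1)) = π i; rw [s_right]
  have e2 : (π * s i) i = π (i + 1) := by show π (s i i) = π (i + 1); rw [s_left]
  rw [e1, e2, Finset.mem_Icc, Finset.mem_Icc]
  omega

lemma special_mem_right {n : ℕ} {π : Equiv.Perm ℕ} {i : ℕ} (hi : 1 ≤ i) (hin : i + 1 ≤ n) :
    (i, i + 1) ∈ invSet n π ↔ π (i + 1) < π i := by
  rw [mem_invSet_iff, Finset.mem_Icc, Finset.mem_Icc]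
  omega

lemma card_invSet_mul_s_asc {n : ℕ} {π : Equiv.Perm ℕ} {i : ℕ} (hi : 1 ≤ i) (hin : i + 1 ≤ n)
    (h : π i < π (i + 1)) :
    (invSet n (π * s i)).card = (invSet n π).card + 1 := by
  have h1 := erase_card_eq (n := n) π hi hin
  have h2 : (i, i + 1) ∈ invSet n (π * s i) := (special_mem_left hi hin).2 h
  have h3 : (i, i + 1) ∉ invSet n π := by
    rw [special_mem_right hi hin]; omega
  rw [Finset.erase_eq_of_notMem h3] at h1
  have h4 := Finset.card_erase_of_mem h2
  have h5 : 0 < (invSet n (π * s i)).card := Finset.card_pos.2 ⟨_, h2⟩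
  omega

lemma card_invSet_mul_s_desc {n : ℕ} {π : Equiv.Perm ℕ} {i : ℕ} (hi : 1 ≤ i) (hin : i + 1 ≤ n)
    (h : π (i + 1) < π i) :
    (invSet n (π * s i)).card + 1 = (invSet n π).card := by
  have h1 := erase_card_eq (n := n) π hi hin
  have h2 : (i, i + 1) ∈ invSet n π := (special_mem_right hi hin).2 h
  have h3 : (i, i + 1) ∉ invSet n (π * s i) := by
    rw [special_mem_left hi hin]; omega
  rw [Finset.erase_eq_of_notMem h3] at h1
  have h4 := Finset.card_erase_of_mem h2
  have h5 : 0 < (invSet n π).card := Finset.card_pos.2 ⟨_, h2⟩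
  omega

lemma exists_descent {n : ℕ} {π : Equiv.Perm ℕ} (h : 0 < (invSet n π).card) :
    ∃ i, 1 ≤ i ∧ i + 1 ≤ n ∧ π (i + 1) < π i := by
  obtain ⟨⟨p, q⟩, hpq⟩ := Finset.card_pos.1 h
  rw [mem_invSet_iff, Finset.mem_Icc, Finset.mem_Icc] at hpq
  obtain ⟨hp, hq, hlt, hgt⟩ := hpq
  by_contra hcon
  push_neg at hcon
  have mono : ∀ k, p + k ≤ q → π p ≤ π (p + k) := by
    intro k
    induction k with
    | zero => intro _; simp
    | succ m ih =>
      intro hk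
      have h1 := ih (by omega)
      have h2 := hcon (p + m) (by omega) (by omega)
      have : π (p + m) ≤ π (p + m + 1) := by omega
      calc π p ≤ π (p + m) := h1
      _ ≤ π (p + (m + 1)) := by rw [show p + (m + 1) = p + m + 1 by omega]; exact this
  have := mono (q - p) (by omega)
  rw [show p + (q - p) = q by omega] at this
  omega

lemma wperm_box {n : ℕ} {w : List ℕ} (hw : IsExpr n w) :
    ∀ x, wperm w x ∈ Finset.Icc 1 n ↔ x ∈ Finset.Icc 1 n := by
  induction w with
  | nil => intro x; rw [wperm_nil]; rfl
  | cons i t ih =>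
    intro x
    have hi := hw i (by simp)
    have hx : wperm (i :: t) x = wperm t (s i x) := by rw [wperm_cons]; rfl
    rw [hx, ih (fun j hj => hw j (by simp [hj])), s_mem_box hi.1 hi.2]

lemma wperm_fix {n : ℕ} {w : List ℕ} (hw : IsExpr n w) :
    ∀ x, x ∉ Finset.Icc 1 n → wperm w x = x := by
  induction w with
  | nil => intro x _; rw [wperm_nil]; rfl
  | cons i t ih =>
    intro x hx
    have hi := hw i (by simp)
    rw [Finset.mem_Icc] at hx
    have hsx : s i x = x := s_ne i x (by omega) (by omega)
    have : wperm (i :: t) x = wperm t (s i x) := by rw [wperm_cons]; rfl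
    rw [this, hsx]
    exact ih (fun j hj => hw j (by simp [hj])) x (by rw [Finset.mem_Icc]; omega)

lemma eq_one_of_no_inv {n : ℕ} {π : Equiv.Perm ℕ}
    (hbox : ∀ x, π x ∈ Finset.Icc 1 n ↔ x ∈ Finset.Icc 1 n)
    (hfix : ∀ x, x ∉ Finset.Icc 1 n → π x = x)
    (h : (invSet n π).card = 0) : π = 1 := by
  have hempty : invSet n π = ∅ := Finset.card_eq_zero.1 h
  have key : ∀ x, π x = x := by
    intro x
    induction x using Nat.strong_induction_on with
    | _ x ih =>
      by_cases hxbox : x ∈ Finset.Icc 1 n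
      · -- π⁻¹ x is in the box
        have hinv : π⁻¹ x ∈ Finset.Icc 1 n := by
          rw [← hbox, (Equiv.Perm.eq_inv_iff_eq.1 rfl)]; exact hxbox
        have hy : ¬ π⁻¹ x < x := by
          intro hlt
          have := ih (π⁻¹ x) hlt
          have hx2 : π (π⁻¹ x) = x := (Equiv.Perm.eq_inv_iff_eq.1 rfl)
          rw [this] at hx2
          omega
        have hpx : ¬ π x < x := by
          intro hlt
          have hpxbox : π x ∈ Finset.Icc 1 n := (hbox x).2 hxbox
          have := ih (π x) hlt
          have := π.injective this
          omega
        rcases Nat.lt_or_ge x (π⁻¹ x) with hgt | hge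
        · -- inversion (x, π⁻¹ x)
          exfalso
          have hπx : π (π⁻¹ x) = x := (Equiv.Perm.eq_inv_iff_eq.1 rfl)
          rcases Nat.lt_or_ge x (π x) with hx3 | hx3
          · have hmem : (x, π⁻¹ x) ∈ invSet n π := by
              rw [mem_invSet_iff]
              exact ⟨hxbox, hinv, hgt, by omega⟩
            rw [hempty] at hmem
            exact absurd hmem (Finset.notMem_empty _)
          · have : π x = x := by omega
            have := π.injective (this.trans hπx.symm)
            omega
        · have hx4 : π⁻¹ x = x := by omega
          rw [← hx4, (Equiv.Perm.eq_inv_iff_eq.1 rfl)]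
          rw [hx4]
      · exact hfix x hxbox
  ext x
  exact key x

lemma exists_reduced {n : ℕ} : ∀ (L : ℕ) (w : List ℕ), IsExpr n w →
    (invSet n (wperm w)).card = L → ∃ r, ReducedExpr n r ∧ wperm r = wperm w := by
  intro L
  induction L using Nat.strong_induction_on with
  | _ L ih =>
    intro w hw hL
    rcases Nat.eq_zero_or_pos L with rfl | hpos
    · refine ⟨[], ⟨fun i hi => absurd hi List.not_mem_nil, ?_⟩, ?_⟩
      · rw [wperm_nil, invSet_one]; rfl
      · rw [wperm_nil]
        exact (eq_one_of_no_inv (wperm_box hw) (wperm_fix hw) hL).symm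
    · obtain ⟨i, hi, hin, hdesc⟩ := exists_descent (n := n) (π := wperm w) (by omega)
      have hnext : (invSet n (wperm (i :: w))).card + 1 = L := by
        rw [wperm_cons]
        rw [← hL]
        exact card_invSet_mul_s_desc hi hin hdesc
      have hexpr : IsExpr n (i :: w) := by
        intro j hj
        rcases List.mem_cons.1 hj with rfl | hj
        · exact ⟨hi, hin⟩
        · exact hw j hj
      obtain ⟨r, hr, hrw⟩ := ih (L - 1) (by omega) (i :: w) hexpr (by omega)
      refine ⟨i :: r, ⟨?_, ?_⟩, ?_⟩
      · intro j hj
        rcases List.mem_cons.1 hj with rfl | hj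
        · exact ⟨hi, hin⟩
        · exact hr.1 j hj
      · have hwr : wperm (i :: r) = wperm w := by
          rw [wperm_cons, hrw, wperm_cons, mul_assoc]
          have : s i * s i = 1 := by
            ext x; simp [Equiv.Perm.mul_apply, s_s]
          rw [this, mul_one]
        have hlen : (i :: r).length = r.length + 1 := rfl
        rw [hlen, hr.2, hrw, hwr, hL]
        exact hnext
      · rw [wperm_cons, hrw, wperm_cons, mul_assoc]
        have : s i * s i = 1 := by
          ext x; simp [Equiv.Perm.mul_apply, s_s]
        rw [this, mul_one]

end Length
section Connect

lemma s_mul_s (i : ℕ) : s i * s i = 1 := by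
  ext x; simp [Equiv.Perm.mul_apply, s_s]

lemma braidStep_cons {k : ℕ} {u v : List ℕ} (h : BraidStep u v) : BraidStep (k :: u) (k :: v) := by
  rcases h with ⟨a, b, i, j, hij⟩ | ⟨a, b, i, j, hij⟩
  · exact Or.inl (StepI.mk (k :: a) b i j hij)
  · exact Or.inr (StepII.mk (k :: a) b i j hij)

lemma conn_cons {k : ℕ} {u v : List ℕ} (h : Relation.ReflTransGen BraidStep u v) :
    Relation.ReflTransGen BraidStep (k :: u) (k :: v) := by
  induction h with
  | refl => exact Relation.ReflTransGen.refl
  | tail _ hbc ih => exact ih.tail (braidStep_cons hbc)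

lemma reduced_cons {n i : ℕ} {u₁ : List ℕ} (h : ReducedExpr n (i :: u₁)) :
    ReducedExpr n u₁ ∧ wperm u₁ = wperm (i :: u₁) * s i ∧
      (wperm (i :: u₁)) (i + 1) < (wperm (i :: u₁)) i ∧ 1 ≤ i ∧ i + 1 ≤ n := by
  set π := wperm (i :: u₁) with hπ
  have hi := h.1 i (by simp)
  have hu₁ : wperm u₁ = π * s i := by
    rw [hπ, wperm_cons, mul_assoc, s_mul_s, mul_one]
  have hexpr : IsExpr n u₁ := fun j hj => h.1 j (by simp [hj])
  have hle : (invSet n (wperm u₁)).card ≤ u₁.length := invSet_card_le hexpr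
  have hlen : u₁.length + 1 = (invSet n π).card := h.2
  have hne : π i ≠ π (i + 1) := fun hc => by have := π.injective hc; omega
  have hdesc : π (i + 1) < π i := by
    rcases Nat.lt_or_ge (π i) (π (i + 1)) with hcase | hcase
    · exfalso
      have := card_invSet_mul_s_asc hi.1 hi.2 hcase
      rw [← hu₁] at this
      omega
    · omega
  have hcard : (invSet n (wperm u₁)).card + 1 = (invSet n π).card := by
    rw [hu₁]; exact card_invSet_mul_s_desc hi.1 hi.2 hdesc
  exact ⟨⟨hexpr, by omega⟩, hu₁, hdesc, hi.1, hi.2⟩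

lemma reduced_push {n i : ℕ} (hi : 1 ≤ i) (hin : i + 1 ≤ n) {r : List ℕ}
    (hr : ReducedExpr n r) {π : Equiv.Perm ℕ} (hπ : wperm r = π * s i)
    (hdesc : π (i + 1) < π i) :
    ReducedExpr n (i :: r) ∧ wperm (i :: r) = π := by
  have hwr : wperm (i :: r) = π := by
    rw [wperm_cons, hπ, mul_assoc, s_mul_s, mul_one]
  have hcard : (invSet n (wperm r)).card + 1 = (invSet n π).card := by
    rw [hπ]; exact card_invSet_mul_s_desc hi hin hdesc
  refine ⟨⟨?_, ?_⟩, hwr⟩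
  · intro j hj
    rcases List.mem_cons.1 hj with rfl | hj
    · exact ⟨hi, hin⟩
    · exact hr.1 j hj
  · have : (i :: r).length = r.length + 1 := rfl
    rw [this, hr.2, hwr]
    omega

lemma comm_words {n i j : ℕ} {π : Equiv.Perm ℕ} (hi : 1 ≤ i) (hin : i + 1 ≤ n)
    (hj : 1 ≤ j) (hjn : j + 1 ≤ n) (hij : i + 2 ≤ j ∨ j + 2 ≤ i)
    (hw : ∃ w, IsExpr n w ∧ wperm w = π)
    (d1 : π (i + 1) < π i) (d2 : π (j + 1) < π j) :
    ∃ r, (ReducedExpr n (i :: j :: r) ∧ wperm (i :: j :: r) = π) ∧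
      (ReducedExpr n (j :: i :: r) ∧ wperm (j :: i :: r) = π) := by
  obtain ⟨w, hwexpr, hwπ⟩ := hw
  have hji : j ≠ i ∧ j ≠ i + 1 ∧ i ≠ j ∧ i ≠ j + 1 ∧ j + 1 ≠ i ∧ j + 1 ≠ i + 1 := by omega
  -- descent of π * s i at j
  have e1 : (π * s i) j = π j := by show π (s i j) = π j; rw [s_ne i j (by omega) (by omega)]
  have e2 : (π * s i) (j + 1) = π (j + 1) := by
    show π (s i (j + 1)) = π (j + 1); rw [s_ne i (j + 1) (by omega) (by omega)]
  have e3 : (π * s j) i = π i := by show π (s j i) = π i; rw [s_ne j i (by omega) (by omega)]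
  have e4 : (π * s j) (i + 1) = π (i + 1) := by
    show π (s j (i + 1)) = π (i + 1); rw [s_ne j (i + 1) (by omega) (by omega)]
  -- realize τ = π * s i * s j
  have hreal : wperm (j :: i :: w) = π * s i * s j := by
    rw [wperm_cons, wperm_cons, hwπ]
  have hexpr2 : IsExpr n (j :: i :: w) := by
    intro m hm
    rcases List.mem_cons.1 hm with rfl | hm
    · exact ⟨hj, hjn⟩
    rcases List.mem_cons.1 hm with rfl | hm
    · exact ⟨hi, hin⟩
    · exact hwexpr m hm
  obtain ⟨r, hr, hrw⟩ := exists_reduced (invSet n (wperm (j :: i :: w))).card (j :: i :: w)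
    hexpr2 rfl
  rw [hreal] at hrw
  have hcomm : π * s i * s j = π * s j * s i := by
    rw [mul_assoc, mul_assoc, s_comm hij]
  -- build j-first word
  have p1 : ReducedExpr n (j :: r) ∧ wperm (j :: r) = π * s i :=
    reduced_push hj hjn hr (by rw [hrw]) (by rw [e1, e2] at *; omega)
  have p2 : ReducedExpr n (i :: j :: r) ∧ wperm (i :: j :: r) = π :=
    reduced_push hi hin p1.1 (by rw [p1.2]) d1
  have q1 : ReducedExpr n (i :: r) ∧ wperm (i :: r) = π * s j :=
    reduced_push hi hin hr (by rw [hrw, hcomm]) (by rw [e3, e4] at *; omega)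
  have q2 : ReducedExpr n (j :: i :: r) ∧ wperm (j :: i :: r) = π :=
    reduced_push hj hjn q1.1 (by rw [q1.2]) d2
  exact ⟨r, p2, q2⟩

lemma adj_words {n i : ℕ} {π : Equiv.Perm ℕ} (hi : 1 ≤ i) (hin : i + 2 ≤ n)
    (hw : ∃ w, IsExpr n w ∧ wperm w = π)
    (d1 : π (i + 1) < π i) (d2 : π (i + 1 + 1) < π (i + 1)) :
    ∃ r, (ReducedExpr n (i :: (i + 1) :: i :: r) ∧ wperm (i :: (i + 1) :: i :: r) = π) ∧
      (ReducedExpr n ((i + 1) :: i :: (i + 1) :: r) ∧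
        wperm ((i + 1) :: i :: (i + 1) :: r) = π) := by
  obtain ⟨w, hwexpr, hwπ⟩ := hw
  have sv1 : s i i = i + 1 := s_left i
  have sv2 : s i (i + 1) = i := s_right i
  have sv3 : s i (i + 1 + 1) = i + 1 + 1 := s_ne i _ (by omega) (by omega)
  have sv4 : s (i + 1) i = i := s_ne (i + 1) i (by omega) (by omega)
  have sv5 : s (i + 1) (i + 1) = i + 1 + 1 := s_left (i + 1)
  have sv6 : s (i + 1) (i + 1 + 1) = i + 1 := s_right (i + 1)
  -- realize τ₃ = π * s i * s (i+1) * s i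
  have hreal : wperm (i :: (i + 1) :: i :: w) = π * s i * s (i + 1) * s i := by
    rw [wperm_cons, wperm_cons, wperm_cons, hwπ]
  have hexpr2 : IsExpr n (i :: (i + 1) :: i :: w) := by
    intro m hm
    simp only [List.mem_cons] at hm
    rcases hm with rfl | rfl | rfl | hm
    · exact ⟨hi, by omega⟩
    · exact ⟨by omega, by omega⟩
    · exact ⟨hi, by omega⟩
    · exact hwexpr m hm
  obtain ⟨r, hr, hrw⟩ := exists_reduced (invSet n (wperm (i :: (i + 1) :: i :: w))).card _
    hexpr2 rfl
  rw [hreal] at hrw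
  have hbraidπ : π * s i * s (i + 1) * s i = π * s (i + 1) * s i * s (i + 1) := by
    have hb : s i * (s (i + 1) * s i) = s (i + 1) * (s i * s (i + 1)) := by
      rw [← mul_assoc, ← mul_assoc]; exact s_braid i
    rw [mul_assoc, mul_assoc, mul_assoc, mul_assoc, hb]
  -- first word: i :: (i+1) :: i :: r
  have ea1 : (π * s i * s (i + 1)) i = π (i + 1) := by
    show π (s i (s (i + 1) i)) = _; rw [sv4, sv1]
  have ea2 : (π * s i * s (i + 1)) (i + 1) = π (i + 1 + 1) := by
    show π (s i (s (i + 1) (i + 1))) = _; rw [sv5, sv3]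
  have eb1 : (π * s i) (i + 1) = π i := by show π (s i (i + 1)) = _; rw [sv2]
  have eb2 : (π * s i) (i + 1 + 1) = π (i + 1 + 1) := by show π (s i (i + 1 + 1)) = _; rw [sv3]
  have p1 : ReducedExpr n (i :: r) ∧ wperm (i :: r) = π * s i * s (i + 1) :=
    reduced_push hi (by omega) hr (by rw [hrw]) (by rw [ea1, ea2] at *; omega)
  have p2 : ReducedExpr n ((i + 1) :: i :: r) ∧ wperm ((i + 1) :: i :: r) = π * s i :=
    reduced_push (by omega) (by omega) p1.1 (by rw [p1.2]) (by rw [eb1, eb2] at *; omega)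
  have p3 : ReducedExpr n (i :: (i + 1) :: i :: r) ∧ wperm (i :: (i + 1) :: i :: r) = π :=
    reduced_push hi (by omega) p2.1 (by rw [p2.2]) d1
  -- second word: (i+1) :: i :: (i+1) :: r
  have ec1 : (π * s (i + 1) * s i) (i + 1) = π i := by
    show π (s (i + 1) (s i (i + 1))) = _; rw [sv2, sv4]
  have ec2 : (π * s (i + 1) * s i) (i + 1 + 1) = π (i + 1) := by
    show π (s (i + 1) (s i (i + 1 + 1))) = _; rw [sv3, sv6]
  have ed1 : (π * s (i + 1)) i = π i := by show π (s (i + 1) i) = _; rw [sv4]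
  have ed2 : (π * s (i + 1)) (i + 1) = π (i + 1 + 1) := by
    show π (s (i + 1) (i + 1)) = _; rw [sv5]
  have q1 : ReducedExpr n ((i + 1) :: r) ∧ wperm ((i + 1) :: r) = π * s (i + 1) * s i :=
    reduced_push (by omega) (by omega) hr (by rw [hrw, hbraidπ]) (by rw [ec1, ec2] at *; omega)
  have q2 : ReducedExpr n (i :: (i + 1) :: r) ∧ wperm (i :: (i + 1) :: r) = π * s (i + 1) :=
    reduced_push hi (by omega) q1.1 (by rw [q1.2]) (by rw [ed1, ed2] at *; omega)
  have q3 : ReducedExpr n ((i + 1) :: i :: (i + 1) :: r) ∧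
      wperm ((i + 1) :: i :: (i + 1) :: r) = π :=
    reduced_push (by omega) (by omega) q2.1 (by rw [q2.2]) d2
  exact ⟨r, p3, q3⟩

lemma connect {n : ℕ} : ∀ (L : ℕ) (u v : List ℕ), ReducedExpr n u → ReducedExpr n v →
    wperm u = wperm v → u.length = L → Relation.ReflTransGen BraidStep u v := by
  intro L
  induction L using Nat.strong_induction_on with
  | _ L ih =>
    intro u v hu hv heq hL
    have hlenv : v.length = L := by
      rw [hv.2, ← heq, ← hu.2, hL]
    rcases Nat.eq_zero_or_pos L with rfl | hpos
    · rw [List.length_eq_zero_iff] at hL hlenv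
      rw [hL, hlenv]
    · -- both nonempty
      cases u with
      | nil => simp at hL; omega
      | cons i u₁ =>
        cases v with
        | nil => simp at hlenv; omega
        | cons j v₁ =>
          set π := wperm (i :: u₁) with hπ
          obtain ⟨hu₁, hwu₁, hdi, hi1, hi2⟩ := reduced_cons hu
          obtain ⟨hv₁, hwv₁, hdj, hj1, hj2⟩ := reduced_cons hv
          rw [← heq] at hwv₁ hdj
          have hreal : ∃ w, IsExpr n w ∧ wperm w = π := ⟨i :: u₁, hu.1, rfl⟩
          have hL1 : u₁.length = L - 1 := by simp at hL; omega
          have hlv1 : v₁.length = L - 1 := by simp at hlenv; omega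
          by_cases hij : i = j
          · subst hij
            have : Relation.ReflTransGen BraidStep u₁ v₁ :=
              ih (L - 1) (by omega) u₁ v₁ hu₁ hv₁ (by rw [hwu₁, hwv₁]) hL1
            exact conn_cons this
          · rcases (by omega : i + 1 = j ∨ j + 1 = i ∨ i + 2 ≤ j ∨ j + 2 ≤ i) with hc | hc | hc | hc
            · -- j = i + 1
              subst hc
              obtain ⟨r, ⟨hw1r, hw1p⟩, ⟨hw2r, hw2p⟩⟩ :=
                adj_words hi1 hj2 hreal hdi hdj
              have t1 : Relation.ReflTransGen BraidStep u₁ ((i + 1) :: i :: r) := by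
                obtain ⟨hw1t, hw1tw, _, _, _⟩ := reduced_cons hw1r
                refine ih (L - 1) (by omega) u₁ _ hu₁ hw1t ?_ hL1
                rw [hwu₁, hw1tw, hw1p]
              have t2 : Relation.ReflTransGen BraidStep (i :: (i + 1) :: i :: r)
                  ((i + 1) :: i :: (i + 1) :: r) :=
                Relation.ReflTransGen.single
                  (Or.inl (StepI.mk [] r i (i + 1) (Or.inl rfl)))
              have t3 : Relation.ReflTransGen BraidStep (i :: (i + 1) :: r) v₁ := by
                obtain ⟨hw2t, hw2tw, _, _, _⟩ := reduced_cons hw2r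
                refine ih (L - 1) (by omega) _ v₁ hw2t hv₁ ?_ ?_
                · rw [hwv₁, hw2tw, hw2p]
                · have := hw2r.2
                  have h4 := hv.2
                  simp only [List.length_cons] at this h4 ⊢
                  rw [hw2p] at this
                  rw [← heq] at h4
                  omega
              exact ((conn_cons t1).trans t2).trans (conn_cons t3)
            · -- i = j + 1
              subst hc
              obtain ⟨r, ⟨hw1r, hw1p⟩, ⟨hw2r, hw2p⟩⟩ :=
                adj_words hj1 hi2 hreal hdj hdi
              have t1 : Relation.ReflTransGen BraidStep u₁ (j :: (j + 1) :: r) := by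
                obtain ⟨hw2t, hw2tw, _, _, _⟩ := reduced_cons hw2r
                refine ih (L - 1) (by omega) u₁ _ hu₁ hw2t ?_ hL1
                rw [hwu₁, hw2tw, hw2p]
              have t2 : Relation.ReflTransGen BraidStep ((j + 1) :: j :: (j + 1) :: r)
                  (j :: (j + 1) :: j :: r) :=
                Relation.ReflTransGen.single
                  (Or.inl (StepI.mk [] r (j + 1) j (Or.inr rfl)))
              have t3 : Relation.ReflTransGen BraidStep ((j + 1) :: j :: r) v₁ := by
                obtain ⟨hw1t, hw1tw, _, _, _⟩ := reduced_cons hw1r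
                refine ih (L - 1) (by omega) _ v₁ hw1t hv₁ ?_ ?_
                · rw [hwv₁, hw1tw, hw1p]
                · have := hw1r.2
                  simp only [List.length_cons] at this ⊢
                  rw [hw1p] at this
                  have h4 := hv.2
                  rw [← heq] at h4
                  simp only [List.length_cons] at h4
                  omega
              exact ((conn_cons t1).trans t2).trans (conn_cons t3)
            · -- i + 2 ≤ j
              obtain ⟨r, ⟨hw1r, hw1p⟩, ⟨hw2r, hw2p⟩⟩ :=
                comm_words hi1 hi2 hj1 hj2 (Or.inl hc) hreal hdi hdj
              have t1 : Relation.ReflTransGen BraidStep u₁ (j :: r) := by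
                obtain ⟨hw1t, hw1tw, _, _, _⟩ := reduced_cons hw1r
                refine ih (L - 1) (by omega) u₁ _ hu₁ hw1t ?_ hL1
                rw [hwu₁, hw1tw, hw1p]
              have t2 : Relation.ReflTransGen BraidStep (i :: j :: r) (j :: i :: r) :=
                Relation.ReflTransGen.single
                  (Or.inr (StepII.mk [] r i j (Or.inl hc)))
              have t3 : Relation.ReflTransGen BraidStep (i :: r) v₁ := by
                obtain ⟨hw2t, hw2tw, _, _, _⟩ := reduced_cons hw2r
                refine ih (L - 1) (by omega) _ v₁ hw2t hv₁ ?_ ?_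
                · rw [hwv₁, hw2tw, hw2p]
                · have := hw2r.2
                  simp only [List.length_cons] at this ⊢
                  rw [hw2p] at this
                  have h4 := hv.2
                  rw [← heq] at h4
                  simp only [List.length_cons] at h4
                  omega
              exact ((conn_cons t1).trans t2).trans (conn_cons t3)
            · -- j + 2 ≤ i
              obtain ⟨r, ⟨hw1r, hw1p⟩, ⟨hw2r, hw2p⟩⟩ :=
                comm_words hi1 hi2 hj1 hj2 (Or.inr hc) hreal hdi hdj
              have t1 : Relation.ReflTransGen BraidStep u₁ (j :: r) := by
                obtain ⟨hw1t, hw1tw, _, _, _⟩ := reduced_cons hw1r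
                refine ih (L - 1) (by omega) u₁ _ hu₁ hw1t ?_ hL1
                rw [hwu₁, hw1tw, hw1p]
              have t2 : Relation.ReflTransGen BraidStep (i :: j :: r) (j :: i :: r) :=
                Relation.ReflTransGen.single
                  (Or.inr (StepII.mk [] r i j (Or.inr hc)))
              have t3 : Relation.ReflTransGen BraidStep (i :: r) v₁ := by
                obtain ⟨hw2t, hw2tw, _, _, _⟩ := reduced_cons hw2r
                refine ih (L - 1) (by omega) _ v₁ hw2t hv₁ ?_ ?_
                · rw [hwv₁, hw2tw, hw2p]
                · have := hw2r.2
                  simp only [List.length_cons] at this ⊢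
                  rw [hw2p] at this
                  have h4 := hv.2
                  rw [← heq] at h4
                  simp only [List.length_cons] at h4
                  omega
              exact ((conn_cons t1).trans t2).trans (conn_cons t3)

end Connect
section Final

lemma conn_deriv {u v : List ℕ} (h : Relation.ReflTransGen BraidStep u v) :
    ∃ c, IsDeriv u v c := by
  induction h with
  | refl => exact ⟨[u], List.isChain_singleton u, rfl, rfl⟩
  | @tail b d _ hbc ih =>
    obtain ⟨c, hc1, hc2, hc3⟩ := ih
    refine ⟨c ++ [d], ?_, ?_, ?_⟩
    · rw [List.Chain', List.isChain_append]
      refine ⟨hc1, List.isChain_singleton _, ?_⟩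
      intro x hx y hy
      simp only [List.head?_cons, Option.mem_def, Option.some.injEq] at hy
      rw [hc3] at hx
      simp only [Option.mem_def, Option.some.injEq] at hx
      rw [← hx, ← hy]
      exact hbc
    · cases c with
      | nil => simp at hc2
      | cons a c' => simpa using hc2
    · simp
  
lemma chain_bound {n : ℕ} : ∀ (c : List (List ℕ)) (w : List ℕ),
    List.Chain' BraidStep (w :: c) → ReducedExpr n w →
    ∀ v', (w :: c).getLast? = some v' → InvCount (names w) (names v') ≤ 3 * c.length := by
  intro c
  induction c with
  | nil =>
    intro w _ _ v' hlast
    simp only [List.getLast?_singleton, Option.some.injEq] at hlast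
    subst hlast
    simp [invCount_self_eq_zero (fun a b => Iff.rfl)]
  | cons w' c ih =>
    intro w hchain hw v' hlast
    have hstep : BraidStep w w' := (List.isChain_cons_cons.1 hchain).1
    have hchain' : List.Chain' BraidStep (w' :: c) := (List.isChain_cons_cons.1 hchain).2
    have hw' : ReducedExpr n w' := braidStep_reduced hw hstep
    have hlast' : (w' :: c).getLast? = some v' := by
      rwa [List.getLast?_cons_cons] at hlast
    have hbound1 : InvCount (names w) (names w') ≤ 3 := by
      rcases hstep with h | h
      · rw [stepI_invCount hw h]
      · rw [stepII_invCount hw h]; omega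
    have hbound2 := ih w' hchain' hw' v' hlast'
    have hfs : (names w).toFinset = (names w').toFinset := by
      rw [reduced_toFinset hw, reduced_toFinset hw', braidStep_wperm hstep]
    have htri := invCount_triangle (names w) (names w') (names v') hfs
    simp only [List.length_cons]
    omega

theorem dist_ge_inv_div_three' (n : ℕ) (u v : List ℕ)
    (hu : ReducedExpr n u) (hv : ReducedExpr n v) (heq : wperm u = wperm v) :
    dist u v ≥ InvCount (names u) (names v) / 3 ∧
    (∀ w w' : List ℕ, ReducedExpr n w → StepI w w' →
      InvCount (names w) (names w') = 3) ∧
    (∀ w w' : List ℕ, ReducedExpr n w → StepII w w' →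
      InvCount (names w) (names w') = 1) := by
  refine ⟨?_, fun w w' hw h => stepI_invCount hw h, fun w w' hw h => stepII_invCount hw h⟩
  have hconn : Relation.ReflTransGen BraidStep u v := connect u.length u v hu hv heq rfl
  obtain ⟨c, hc⟩ := conn_deriv hconn
  have hne : c ≠ [] := by
    intro hnil
    rw [hnil] at hc
    exact absurd hc.2.1 (by simp)
  have hmem : dist u v ∈ {k | ∃ c, IsDeriv u v c ∧ c.length = k + 1} := by
    apply Nat.sInf_mem
    refine ⟨c.length - 1, c, hc, ?_⟩
    have := List.length_pos_iff.2 hne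
    omega
  obtain ⟨c₀, hc₀, hlen₀⟩ := hmem
  cases c₀ with
  | nil => simp at hlen₀
  | cons w₀ c₀' =>
    have hw₀ : w₀ = u := by
      have := hc₀.2.1
      simpa using this
    subst hw₀
    have hbound := chain_bound (n := n) c₀' w₀ hc₀.1 hu v hc₀.2.2
    have hlen' : c₀'.length = dist w₀ v := by
      simp only [List.length_cons] at hlen₀
      omega
    rw [hlen'] at hbound
    omega

end Final

/-- `dist(u,v) ≥ Inv(S(u),S(v))/3`; indeed a type I relation changes `Inv` by exactly
`3` and a commutation relation changes it by exactly `1`. -/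
theorem dist_ge_inv_div_three (n : ℕ) (u v : List ℕ)
    (hu : ReducedExpr n u) (hv : ReducedExpr n v) (heq : wperm u = wperm v) :
    dist u v ≥ InvCount (names u) (names v) / 3 ∧
    (∀ w w' : List ℕ, ReducedExpr n w → StepI w w' →
      InvCount (names w) (names w') = 3) ∧
    (∀ w w' : List ℕ, ReducedExpr n w → StepII w w' →
      InvCount (names w) (names w') = 1) := by
  exact dist_ge_inv_div_three' n u v hu hv heq

end
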